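/- Let $(M^n)_{n\in\mathbb{N}}$ be a sequence of sequences of positive reals with $M^n_p \le M^{n+1}_p$ for all $n,p$, and let $(a_p)_{p\in\mathbb{N}}$ be a sequence of positive reals. If for every sequence $N$ of positive reals satisfying ($\forall n, \forall h>0, \exists C>0, \forall p: M^n_p \le C h^p N_p$) one has $\sup_p a_p/N_p < \infty$, then there exist $h>0$ and $n\in\mathbb{N}$ with $\sup_p h^p a_p / M^n_p < \infty$. -/

import Mathlib

/-- Lemma 3(i), nontrivial direction: if `sup_p a_p / N_p < ∞` for every
`N ∈ V(𝔐)`, then `sup_p h^p a_p / M^n_p < ∞` for some `h > 0` and `n`. -/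
theorem stmt0 (M : ℕ → ℕ → ℝ) (hMpos : ∀ n p, 0 < M n p)
    (hMmono : ∀ n p, M n p ≤ M (n + 1) p)
    (a : ℕ → ℝ) (ha : ∀ p, 0 < a p)
    (H : ∀ N : ℕ → ℝ, (∀ p, 0 < N p) →
      (∀ n : ℕ, ∀ h : ℝ, 0 < h → ∃ C : ℝ, 0 < C ∧ ∀ p : ℕ, M n p ≤ C * h ^ p * N p) →
      ∃ B : ℝ, ∀ p, a p / N p ≤ B) :
    ∃ h : ℝ, 0 < h ∧ ∃ n : ℕ, ∃ B : ℝ, ∀ p, h ^ p * a p / M n p ≤ B := by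
  -- monotonicity of M in the first index
  have Mmono : ∀ n m p, n ≤ m → M n p ≤ M m p := by
    intro n m p hnm
    induction m with
    | zero => simp_all
    | succ m ih =>
      rcases Nat.lt_or_ge n (m + 1) with h' | h'
      · exact le_trans (ih (Nat.lt_succ_iff.mp h')) (hMmono m p)
      · have : n = m + 1 := le_antisymm hnm h'
        simp [this]
  by_contra hcon
  push_neg at hcon
  -- hcon : ∀ h, 0 < h → ∀ n B, ∃ p, B < h ^ p * a p / M n p
  -- Key: for each k, m there is p > m with (k+1) * (k+1)^p * M (k+1) p < a p
  have key : ∀ k m : ℕ, ∃ p : ℕ, m < p ∧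
      ((k + 1 : ℕ) : ℝ) * ((k + 1 : ℕ) : ℝ) ^ p * M (k + 1) p < a p := by
    intro k m
    set c : ℝ := ((k + 1 : ℕ) : ℝ) with hc
    have hcpos : (0 : ℝ) < c := by positivity
    set B : ℝ := c + ∑ q ∈ Finset.range (m + 1), (1 / c) ^ q * a q / M (k + 1) q with hB
    obtain ⟨p, hp⟩ := hcon (1 / c) (by positivity) (k + 1) B
    have hterm : ∀ q, 0 ≤ (1 / c) ^ q * a q / M (k + 1) q := by
      intro q
      have := ha q; have := hMpos (k + 1) q; positivity
    have hsum : 0 ≤ ∑ q ∈ Finset.range (m + 1), (1 / c) ^ q * a q / M (k + 1) q :=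
      Finset.sum_nonneg fun q _ => hterm q
    have hmp : m < p := by
      by_contra hle
      push_neg at hle
      have hmem : p ∈ Finset.range (m + 1) := Finset.mem_range.mpr (by omega)
      have := Finset.single_le_sum (f := fun q => (1 / c) ^ q * a q / M (k + 1) q)
        (fun q _ => hterm q) hmem
      have : (1 / c) ^ p * a p / M (k + 1) p ≤ B := by rw [hB]; linarith
      linarith
    refine ⟨p, hmp, ?_⟩
    have hcB : c ≤ B := by rw [hB]; linarith
    have hMp := hMpos (k + 1) p
    have hcp : (0:ℝ) < c ^ p := by positivity
    have h1 : c * M (k + 1) p < (1 / c) ^ p * a p :=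
      (lt_div_iff₀ hMp).mp (lt_of_le_of_lt hcB hp)
    have h1' : c * M (k + 1) p < a p / c ^ p := by
      rw [one_div, inv_pow] at h1
      rw [div_eq_inv_mul]
      exact h1
    have h2 : c * M (k + 1) p * c ^ p < a p := (lt_div_iff₀ hcp).mp h1'
    calc c * c ^ p * M (k + 1) p = c * M (k + 1) p * c ^ p := by ring
      _ < a p := h2
  choose F hF1 hF2 using key
  -- the recursively defined sequence
  set P : ℕ → ℕ := fun k => Nat.rec 0 (fun k ih => F k ih) k with hP
  have hPsucc : ∀ k, P (k + 1) = F k (P k) := fun k => rfl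
  have hPlt : ∀ k, P k < P (k + 1) := by
    intro k; rw [hPsucc]; exact hF1 k (P k)
  have hPmono : StrictMono P := strictMono_nat_of_lt_succ hPlt
  have hPk : ∀ k, k ≤ P k := by
    intro k
    induction k with
    | zero => exact Nat.zero_le _
    | succ k ih => exact Nat.succ_le_of_lt (lt_of_le_of_lt ih (hPlt k))
  -- the level function
  set g : ℕ → ℕ := fun q => max (Nat.findGreatest (fun k => P k ≤ q) q) 1 with hg
  have hg1 : ∀ q, 1 ≤ g q := fun q => le_max_right _ _
  have hgge : ∀ K q, 1 ≤ K → P K ≤ q → K ≤ g q := by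
    intro K q hK hPKq
    have : K ≤ Nat.findGreatest (fun k => P k ≤ q) q :=
      Nat.le_findGreatest (le_trans (hPk K) hPKq) hPKq
    exact le_trans this (le_max_left _ _)
  have hgval : ∀ k, g (P (k + 1)) = k + 1 := by
    intro k
    have h1 : k + 1 ≤ g (P (k + 1)) := hgge (k + 1) (P (k + 1)) (Nat.succ_le_succ (Nat.zero_le _)) le_rfl
    have h2 : Nat.findGreatest (fun j => P j ≤ P (k + 1)) (P (k + 1)) ≤ k + 1 := by
      set j := Nat.findGreatest (fun j => P j ≤ P (k + 1)) (P (k + 1)) with hj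
      have hspec : P j ≤ P (k + 1) := by
        have h0 : (fun j => P j ≤ P (k + 1)) 0 := by
          simp only []
          have : P 0 = 0 := rfl
          omega
        exact Nat.findGreatest_spec (P := fun j => P j ≤ P (k + 1)) (n := P (k + 1)) (m := 0) (Nat.zero_le _) h0
      exact Nat.le_of_lt_succ (Nat.lt_succ_of_le (hPmono.le_iff_le.mp hspec))
    have : g (P (k + 1)) ≤ k + 1 := by
      rw [hg]; exact max_le h2 (Nat.succ_le_succ (Nat.zero_le _))
    omega
  -- the sequence N
  set N : ℕ → ℝ := fun q => ((g q : ℕ) : ℝ) ^ q * M (g q) q with hN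
  have hNpos : ∀ q, 0 < N q := by
    intro q
    have : (0:ℝ) < ((g q : ℕ) : ℝ) := by
      have := hg1 q; positivity
    have := hMpos (g q) q
    positivity
  -- N satisfies the condition
  have hNcond : ∀ n : ℕ, ∀ h : ℝ, 0 < h → ∃ C : ℝ, 0 < C ∧ ∀ q : ℕ, M n q ≤ C * h ^ q * N q := by
    intro n h hh
    set K : ℕ := n + 1 + ⌈1 / h⌉₊ with hK
    set C : ℝ := 1 + ∑ q ∈ Finset.range (P K), M n q / (h ^ q * N q) with hC
    have hsumnonneg : 0 ≤ ∑ q ∈ Finset.range (P K), M n q / (h ^ q * N q) := by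
      apply Finset.sum_nonneg
      intro q _
      have := hMpos n q; have := hNpos q; positivity
    have hCpos : (0:ℝ) < C := by rw [hC]; linarith
    refine ⟨C, hCpos, ?_⟩
    intro q
    rcases Nat.lt_or_ge q (P K) with hq | hq
    · have hmem : q ∈ Finset.range (P K) := Finset.mem_range.mpr hq
      have hle : M n q / (h ^ q * N q) ≤ C := by
        rw [hC]
        have := Finset.single_le_sum (f := fun q => M n q / (h ^ q * N q))
          (fun q _ => by have := hMpos n q; have := hNpos q; positivity) hmem
        linarith
      have hpos : (0:ℝ) < h ^ q * N q := by have := hNpos q; positivity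
      calc M n q = M n q / (h ^ q * N q) * (h ^ q * N q) := by rw [div_mul_cancel₀ _ hpos.ne']
        _ ≤ C * (h ^ q * N q) := by
            apply mul_le_mul_of_nonneg_right hle (le_of_lt hpos)
        _ = C * h ^ q * N q := by ring
    · -- large q
      have hgK : K ≤ g q := hgge K q (by omega) hq
      have hn : n ≤ g q := le_trans (by omega) hgK
      have hM1 : M n q ≤ M (g q) q := Mmono n (g q) q hn
      have hhg : (1:ℝ) ≤ h * (g q : ℝ) := by
        have h1 : (1/h : ℝ) ≤ (⌈1/h⌉₊ : ℝ) := Nat.le_ceil _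
        have h2 : ((⌈1/h⌉₊ : ℕ) : ℝ) ≤ (K : ℝ) := by
          have : ⌈1/h⌉₊ ≤ K := by omega
          exact_mod_cast this
        have h3 : (K : ℝ) ≤ (g q : ℝ) := by exact_mod_cast hgK
        have : (1/h : ℝ) ≤ (g q : ℝ) := le_trans h1 (le_trans h2 h3)
        calc (1:ℝ) = h * (1/h) := by field_simp
          _ ≤ h * (g q : ℝ) := mul_le_mul_of_nonneg_left this (le_of_lt hh)
      have hpow : (1:ℝ) ≤ (h * (g q : ℝ)) ^ q := one_le_pow₀ hhg
      calc M n q ≤ M (g q) q := hM1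
        _ ≤ (h * (g q : ℝ)) ^ q * M (g q) q := le_mul_of_one_le_left (le_of_lt (hMpos _ _)) hpow
        _ = h ^ q * N q := by rw [hN]; simp [mul_pow]; ring
        _ ≤ C * (h ^ q * N q) := le_mul_of_one_le_left (by have := hNpos q; positivity) (by rw [hC]; linarith)
        _ = C * h ^ q * N q := by ring
  obtain ⟨B, hB⟩ := H N hNpos hNcond
  -- contradiction
  set k : ℕ := ⌈max B 0⌉₊ with hk
  have hkey := hF2 k (P k)
  have hgPk : g (P (k + 1)) = k + 1 := hgval k
  have hNPk : N (P (k + 1)) = ((k + 1 : ℕ) : ℝ) ^ (P (k + 1)) * M (k + 1) (P (k + 1)) := by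
    rw [hN]; simp [hgPk]
  have hBk : a (P (k + 1)) / N (P (k + 1)) ≤ B := hB _
  have hgt : ((k + 1 : ℕ) : ℝ) < a (P (k + 1)) / N (P (k + 1)) := by
    rw [hNPk]
    rw [lt_div_iff₀ (by have := hMpos (k+1) (P (k+1)); positivity)]
    calc ((k + 1 : ℕ) : ℝ) * (((k + 1 : ℕ) : ℝ) ^ (P (k + 1)) * M (k + 1) (P (k + 1)))
        = ((k + 1 : ℕ) : ℝ) * ((k + 1 : ℕ) : ℝ) ^ (P (k + 1)) * M (k + 1) (P (k + 1)) := by ring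
      _ < a (P (k + 1)) := by rw [hPsucc]; exact hF2 k (P k)
  have hBk1 : B < ((k + 1 : ℕ) : ℝ) := by
    have h1 : B ≤ max B 0 := le_max_left _ _
    have h2 : (max B 0 : ℝ) ≤ (⌈max B 0⌉₊ : ℝ) := Nat.le_ceil _
    have : ((k : ℕ) : ℝ) < ((k + 1 : ℕ) : ℝ) := by exact_mod_cast Nat.lt_succ_self k
    push_cast at this ⊢
    linarith
  linarith
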